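/- arXiv:2508.14265 — 2 statements merged into one kernel-verified Lean document; each statement's English description precedes it below -/
import Mathlib

section
/- Let W ⊂ F₂^(m+1) be a 2-dimensional linear subspace and suppose φ : F₂^(m+1) → F₂^(m-1) is such that {φ⁻¹(a) : a ∈ F₂^(m-1)} = {c + W : c ∈ F₂^(m+1)} (the trivial partition into cosets of W). Let f(x,y) = x·φ(y) + h(y) with x ∈ F₂^(m-1), y ∈ F₂^(m+1). Then for each of the 3 nonzero vectors w ∈ W, the m-dimensional subspace ⟨F₂^(m-1) × {0}, (0,w)⟩ is an M-subspace of f; hence f has at least 3 distinct m-dimensional M-subspaces. -/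
open Finset

/-- Dot product on `F₂^k`. -/
def dotp {k : ℕ} (x y : Fin k → ZMod 2) : ZMod 2 := ∑ i, x i * y i

/-- The character `z ↦ (-1)^z`. -/
def chr (z : ZMod 2) : ℤ := (-1 : ℤ) ^ z.val

/-- Walsh–Hadamard transform of a Boolean function on `F₂^p × F₂^q`. -/
def walshP {p q : ℕ} (f : (Fin p → ZMod 2) × (Fin q → ZMod 2) → ZMod 2)
    (a : Fin p → ZMod 2) (b : Fin q → ZMod 2) : ℤ :=
  ∑ x : Fin p → ZMod 2, ∑ y : Fin q → ZMod 2, chr (f (x, y) + dotp a x + dotp b y)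

/-- `S` is a 2-dimensional affine subspace (flat) of `F₂^k`. -/
def Is2Flat {k : ℕ} (S : Set (Fin k → ZMod 2)) : Prop :=
  ∃ (c : Fin k → ZMod 2) (W : Submodule (ZMod 2) (Fin k → ZMod 2)),
    Module.finrank (ZMod 2) ↥W = 2 ∧ S = (fun w => c + w) '' (W : Set (Fin k → ZMod 2))

/-- `V` is an M-subspace of `f`: all second-order derivatives along `V` vanish. -/
def IsMSub {p q : ℕ} (f : (Fin p → ZMod 2) × (Fin q → ZMod 2) → ZMod 2)
    (V : Submodule (ZMod 2) ((Fin p → ZMod 2) × (Fin q → ZMod 2))) : Prop :=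
  ∀ a ∈ V, ∀ b ∈ V, ∀ x, f x + f (x + a) + f (x + b) + f (x + a + b) = 0

lemma dotp_add_left {k : ℕ} (x x' y : Fin k → ZMod 2) :
    dotp (x + x') y = dotp x y + dotp x' y := by
  simp [dotp, add_mul, Finset.sum_add_distrib]

lemma zmod2_four (A B C h1 h2 h3 h4 : ZMod 2) :
    A + h1 + (A + B + h2) + (A + C + h3) + (A + B + C + h4)
      = h1 + h2 + (h3 + h4) := by
  have e2 : (2 : ZMod 2) = 0 := rfl
  have e4 : (4 : ZMod 2) = 0 := rfl
  ring_nf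
  rw [e2, e4]; ring

lemma zmod2_cases (t : ZMod 2) : t = 0 ∨ t = 1 := by revert t; decide

section main
variable {m : ℕ}

lemma phi_shift (φ : (Fin (m + 1) → ZMod 2) → (Fin (m - 1) → ZMod 2))
    (W : Submodule (ZMod 2) (Fin (m + 1) → ZMod 2))
    (hcoset : ∀ a, ∃ c, {y | φ y = a} =
      (fun w => c + w) '' (W : Set (Fin (m + 1) → ZMod 2)))
    (y w : Fin (m + 1) → ZMod 2) (hw : w ∈ W) : φ (y + w) = φ y := by
  obtain ⟨c, hc⟩ := hcoset (φ y)
  have hy : y ∈ {y' | φ y' = φ y} := rfl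
  rw [hc] at hy
  obtain ⟨v, hv, rfl⟩ := hy
  have : c + v + w ∈ (fun w => c + w) '' (W : Set (Fin (m + 1) → ZMod 2)) :=
    ⟨v + w, W.add_mem hv hw, by abel⟩
  rw [← hc] at this
  exact this

/-- The span in the statement equals `range inl ⊔ span {(0,w)}`. -/
lemma span_descr (w : Fin (m + 1) → ZMod 2) :
    Submodule.span (ZMod 2)
        ({p : (Fin (m - 1) → ZMod 2) × (Fin (m + 1) → ZMod 2) | p.2 = 0} ∪ {(0, w)})
      = LinearMap.range (LinearMap.inl (ZMod 2) (Fin (m - 1) → ZMod 2) (Fin (m + 1) → ZMod 2))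
        ⊔ Submodule.span (ZMod 2) {((0 : Fin (m - 1) → ZMod 2), w)} := by
  rw [Submodule.span_union]
  congr 1
  have : {p : (Fin (m - 1) → ZMod 2) × (Fin (m + 1) → ZMod 2) | p.2 = 0}
      = ↑(LinearMap.range (LinearMap.inl (ZMod 2) (Fin (m - 1) → ZMod 2) (Fin (m + 1) → ZMod 2))) := by
    ext p
    constructor
    · rintro hp
      exact ⟨p.1, by ext <;> simp_all [hp.symm]⟩
    · rintro ⟨x, rfl⟩; rfl
  rw [this, Submodule.span_eq]

lemma mem_span_descr (w : Fin (m + 1) → ZMod 2)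
    (a : (Fin (m - 1) → ZMod 2) × (Fin (m + 1) → ZMod 2))
    (ha : a ∈ Submodule.span (ZMod 2)
        ({p : (Fin (m - 1) → ZMod 2) × (Fin (m + 1) → ZMod 2) | p.2 = 0} ∪ {(0, w)})) :
    a.2 = 0 ∨ a.2 = w := by
  rw [span_descr, Submodule.mem_sup] at ha
  obtain ⟨u, ⟨x, rfl⟩, v, hv, rfl⟩ := ha
  rw [Submodule.mem_span_singleton] at hv
  obtain ⟨t, rfl⟩ := hv
  rcases zmod2_cases t with ht | ht <;> subst ht <;> simp

lemma V_inj (w w' : Fin (m + 1) → ZMod 2) (hw : w ≠ 0) (hw' : w' ≠ 0)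
    (hVV : Submodule.span (ZMod 2)
        ({p : (Fin (m - 1) → ZMod 2) × (Fin (m + 1) → ZMod 2) | p.2 = 0} ∪ {(0, w)})
      = Submodule.span (ZMod 2)
        ({p : (Fin (m - 1) → ZMod 2) × (Fin (m + 1) → ZMod 2) | p.2 = 0} ∪ {(0, w')})) :
    w = w' := by
  have hmem : ((0 : Fin (m - 1) → ZMod 2), w') ∈ Submodule.span (ZMod 2)
      ({p : (Fin (m - 1) → ZMod 2) × (Fin (m + 1) → ZMod 2) | p.2 = 0} ∪ {(0, w')}) :=
    Submodule.subset_span (Or.inr rfl)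
  rw [← hVV] at hmem
  rcases mem_span_descr w _ hmem with h0 | he
  · exact absurd h0 hw'
  · exact he.symm

lemma isMSub_lemma (φ : (Fin (m + 1) → ZMod 2) → (Fin (m - 1) → ZMod 2))
    (h : (Fin (m + 1) → ZMod 2) → ZMod 2)
    (f : (Fin (m - 1) → ZMod 2) × (Fin (m + 1) → ZMod 2) → ZMod 2)
    (hf : ∀ x y, f (x, y) = dotp x (φ y) + h y)
    (W : Submodule (ZMod 2) (Fin (m + 1) → ZMod 2))
    (hcoset : ∀ a, ∃ c, {y | φ y = a} =
      (fun w => c + w) '' (W : Set (Fin (m + 1) → ZMod 2)))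
    (w : Fin (m + 1) → ZMod 2) (hwW : w ∈ W) :
    IsMSub f (Submodule.span (ZMod 2)
        ({p : (Fin (m - 1) → ZMod 2) × (Fin (m + 1) → ZMod 2) | p.2 = 0} ∪ {(0, w)})) := by
  intro a ha b hb x
  obtain ⟨x₁, x₂⟩ := x
  obtain ⟨a₁, a₂⟩ := a
  obtain ⟨b₁, b₂⟩ := b
  have sh : ∀ y : Fin (m+1) → ZMod 2, ∀ v, (v = 0 ∨ v = w) → φ (y + v) = φ y := by
    rintro y v (rfl | rfl)
    · simp
    · exact phi_shift φ W hcoset y _ hwW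
  have ha2 := mem_span_descr w _ ha
  have hb2 := mem_span_descr w _ hb
  simp only [Prod.mk_add_mk, hf] at *
  rw [sh x₂ a₂ ha2, sh x₂ b₂ hb2, sh (x₂ + a₂) b₂ hb2, sh x₂ a₂ ha2]
  simp only [dotp_add_left]
  have hcan : ∀ z : ZMod 2, z + z = 0 := by decide
  have hgen : ∀ u v : ZMod 2, u + (v + (v + u)) = 0 := by decide
  have hh : h x₂ + h (x₂ + a₂) + (h (x₂ + b₂) + h (x₂ + a₂ + b₂)) = 0 := by
    rcases ha2 with rfl | rfl <;> rcases hb2 with rfl | rfl <;>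
      simp [add_assoc, hcan, CharTwo.add_self_eq_zero, hgen]
  rw [zmod2_four]
  exact hh

lemma finrank_lemma (w : Fin (m + 1) → ZMod 2) (hw : w ≠ 0) (hm : 1 ≤ m) :
    Module.finrank (ZMod 2)
        ↥(Submodule.span (ZMod 2)
          ({p : (Fin (m - 1) → ZMod 2) × (Fin (m + 1) → ZMod 2) | p.2 = 0} ∪ {(0, w)})) = m := by
  rw [span_descr]
  set U := LinearMap.range (LinearMap.inl (ZMod 2) (Fin (m - 1) → ZMod 2) (Fin (m + 1) → ZMod 2))
  set S := Submodule.span (ZMod 2) {((0 : Fin (m - 1) → ZMod 2), w)}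
  have hUS : U ⊓ S = ⊥ := by
    rw [eq_bot_iff]
    intro p hp
    rw [Submodule.mem_inf] at hp
    obtain ⟨⟨x, rfl⟩, hp2⟩ := hp
    rw [Submodule.mem_span_singleton] at hp2
    rw [Submodule.mem_bot]
    obtain ⟨t, ht⟩ := hp2
    rcases zmod2_cases t with rfl | rfl
    · simp_all
    · exfalso; apply hw
      have := congrArg Prod.snd ht
      simpa using this
  have h1 : Module.finrank (ZMod 2) ↥U = m - 1 := by
    rw [LinearMap.finrank_range_of_inj LinearMap.inl_injective, Module.finrank_fin_fun]
  have h2 : Module.finrank (ZMod 2) ↥S = 1 :=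
    finrank_span_singleton (by simp [hw, Prod.ext_iff])
  have := Submodule.finrank_sup_add_finrank_inf_eq U S
  rw [hUS, h1, h2] at this
  simp at this
  omega


/-- a trivial partition into cosets of a fixed 2-dimensional `W` gives,
for each of the 3 nonzero `w ∈ W`, the `m`-dimensional M-subspace
`⟨F₂^{m-1} × {0}, (0,w)⟩`; hence at least 3 distinct `m`-dimensional M-subspaces. -/
theorem trivial_partition_three_M_subspaces {m : ℕ}
    (φ : (Fin (m + 1) → ZMod 2) → (Fin (m - 1) → ZMod 2))
    (h : (Fin (m + 1) → ZMod 2) → ZMod 2)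
    (f : (Fin (m - 1) → ZMod 2) × (Fin (m + 1) → ZMod 2) → ZMod 2)
    (hf : ∀ x y, f (x, y) = dotp x (φ y) + h y)
    (W : Submodule (ZMod 2) (Fin (m + 1) → ZMod 2))
    (hW : Module.finrank (ZMod 2) ↥W = 2)
    (hcoset : ∀ a, ∃ c, {y | φ y = a} =
      (fun w => c + w) '' (W : Set (Fin (m + 1) → ZMod 2))) :
    (∀ w ∈ W, w ≠ 0 →
      IsMSub f (Submodule.span (ZMod 2)
        ({p : (Fin (m - 1) → ZMod 2) × (Fin (m + 1) → ZMod 2) | p.2 = 0} ∪ {(0, w)})) ∧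
      Module.finrank (ZMod 2)
        ↥(Submodule.span (ZMod 2)
          ({p : (Fin (m - 1) → ZMod 2) × (Fin (m + 1) → ZMod 2) | p.2 = 0} ∪ {(0, w)})) = m) ∧
    ∃ V₁ V₂ V₃ : Submodule (ZMod 2) ((Fin (m - 1) → ZMod 2) × (Fin (m + 1) → ZMod 2)),
      V₁ ≠ V₂ ∧ V₁ ≠ V₃ ∧ V₂ ≠ V₃ ∧
      (IsMSub f V₁ ∧ Module.finrank (ZMod 2) ↥V₁ = m) ∧
      (IsMSub f V₂ ∧ Module.finrank (ZMod 2) ↥V₂ = m) ∧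
      (IsMSub f V₃ ∧ Module.finrank (ZMod 2) ↥V₃ = m) := by
  have hm : 1 ≤ m := by
    have h1 := Submodule.finrank_le W
    rw [hW, Module.finrank_fin_fun] at h1
    omega
  have main : ∀ w ∈ W, w ≠ 0 →
      IsMSub f (Submodule.span (ZMod 2)
        ({p : (Fin (m - 1) → ZMod 2) × (Fin (m + 1) → ZMod 2) | p.2 = 0} ∪ {(0, w)})) ∧
      Module.finrank (ZMod 2)
        ↥(Submodule.span (ZMod 2)
          ({p : (Fin (m - 1) → ZMod 2) × (Fin (m + 1) → ZMod 2) | p.2 = 0} ∪ {(0, w)})) = m :=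
    fun w hwW hw => ⟨isMSub_lemma φ h f hf W hcoset w hwW, finrank_lemma w hw hm⟩
  refine ⟨main, ?_⟩
  -- pick three distinct nonzero elements of W
  let b : Module.Basis (Fin 2) (ZMod 2) ↥W := Module.finBasisOfFinrankEq (ZMod 2) ↥W hW
  have addself : ∀ x : ↥W, x + x = 0 := by
    intro x
    have h2 : ((2 : ZMod 2)) • x = 0 := by
      rw [show ((2 : ZMod 2)) = 0 from rfl, zero_smul]
    rw [← two_smul (ZMod 2) x]
    exact h2
  have hb01 : b 0 ≠ b 1 := by
    intro e
    have := b.injective e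
    simp at this
  have hb0 : b 0 ≠ 0 := b.ne_zero 0
  have hb1 : b 1 ≠ 0 := b.ne_zero 1
  have hbsum : b 0 + b 1 ≠ 0 := by
    intro e
    apply hb01
    calc b 0 = b 0 + (b 1 + b 1) := by rw [addself (b 1), add_zero]
      _ = (b 0 + b 1) + b 1 := by rw [add_assoc]
      _ = b 1 := by rw [e, zero_add]
  set w₁ : Fin (m + 1) → ZMod 2 := ((b 0 : ↥W) : Fin (m + 1) → ZMod 2)
  set w₂ : Fin (m + 1) → ZMod 2 := ((b 1 : ↥W) : Fin (m + 1) → ZMod 2)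
  set w₃ : Fin (m + 1) → ZMod 2 := ((b 0 + b 1 : ↥W) : Fin (m + 1) → ZMod 2)
  have hw₁W : w₁ ∈ W := (b 0).2
  have hw₂W : w₂ ∈ W := (b 1).2
  have hw₃W : w₃ ∈ W := (b 0 + b 1).2
  have hw₁ : w₁ ≠ 0 := fun e => hb0 (Subtype.ext e)
  have hw₂ : w₂ ≠ 0 := fun e => hb1 (Subtype.ext e)
  have hw₃ : w₃ ≠ 0 := fun e => hbsum (Subtype.ext e)
  have h12 : w₁ ≠ w₂ := fun e => hb01 (Subtype.ext e)
  have h13 : w₁ ≠ w₃ := by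
    intro e
    apply hb1
    have e' : b 0 = b 0 + b 1 := Subtype.ext e
    have h2 : b 0 + b 0 = b 0 + (b 0 + b 1) := by rw [← e']
    rw [addself (b 0), ← add_assoc, addself (b 0), zero_add] at h2
    exact h2.symm
  have h23 : w₂ ≠ w₃ := by
    intro e
    apply hb0
    have e' : b 1 = b 0 + b 1 := Subtype.ext e
    have h2 : b 1 + b 1 = (b 0 + b 1) + b 1 := by rw [← e']
    rw [addself (b 1), add_assoc, addself (b 1), add_zero] at h2
    exact h2.symm
  refine ⟨_, _, _,
    fun e => h12 (V_inj _ _ hw₁ hw₂ e),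
    fun e => h13 (V_inj _ _ hw₁ hw₃ e),
    fun e => h23 (V_inj _ _ hw₂ hw₃ e),
    main w₁ hw₁W hw₁, main w₂ hw₂W hw₂, main w₃ hw₃W hw₃⟩

end main
end

section
/- Let f(x,y) = x·φ(y) + h(y) on F₂^(m-1) × F₂^(m+1) where the preimages φ⁻¹(a) are (not necessarily affine) 4-element sets partitioning F₂^(m+1). Then for every (a,b) ∈ F₂^(m-1) × F₂^(m+1), the Walsh coefficient W_f(a,b) lies in {0, ±2^m, ±2^{m+1}}; consequently f is bent, semi-bent, or has 5-valued Walsh spectrum {0, ±2^m, ±2^{m+1}}. -/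
open Finset

lemma chr_add (a b : ZMod 2) : chr (a + b) = chr a * chr b := by revert a b; decide

lemma dotp_add_right {k : ℕ} (x a b : Fin k → ZMod 2) :
    dotp x (a + b) = dotp x a + dotp x b := by
  simp [dotp, mul_add, Finset.sum_add_distrib]

lemma dotp_comm {k : ℕ} (x y : Fin k → ZMod 2) : dotp x y = dotp y x := by
  simp [dotp, mul_comm]

lemma dotp_flip {k : ℕ} (x c : Fin k → ZMod 2) (i : Fin k) :
    dotp (Function.update x i (x i + 1)) c = dotp x c + c i := by
  unfold dotp
  have hfun : ∀ j, Function.update x i (x i + 1) j * c j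
      = x j * c j + if j = i then c j else 0 := by
    intro j
    by_cases hj : j = i
    · subst hj; simp [Function.update]; ring
    · simp [Function.update, hj]
  simp [hfun, Finset.sum_add_distrib]

lemma sum_chr_dotp {k : ℕ} (c : Fin k → ZMod 2) :
    ∑ x : Fin k → ZMod 2, chr (dotp x c) = if c = 0 then 2 ^ k else 0 := by
  split_ifs with hc
  · subst hc
    have h0 : ∀ x : Fin k → ZMod 2, dotp x 0 = 0 := by
      intro x; simp [dotp]
    simp [h0, chr, Finset.card_univ]
  · obtain ⟨i, hi⟩ : ∃ i, c i ≠ 0 := by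
      by_contra hall; push_neg at hall; exact hc (funext hall)
    have hci : c i = 1 := by
      revert hi; generalize c i = t; revert t; decide
    refine Finset.sum_ninvolution (fun x => Function.update x i (x i + 1)) ?_ ?_
      (fun _ => Finset.mem_univ _) ?_
    · intro x
      rw [dotp_flip, chr_add, hci]
      have : chr 1 = -1 := by decide
      rw [this]; ring
    · intro x _
      intro hgx
      have := congrFun hgx i
      simp only [Function.update_self] at this
      revert this
      generalize x i = t; revert t; decide
    · intro x
      show Function.update (Function.update x i (x i + 1)) i
          (Function.update x i (x i + 1) i + 1) = x
      have h2 : x i + 1 + 1 = x i := by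
        generalize x i = t; revert t; decide
      rw [Function.update_self, Function.update_idem, h2, Function.update_eq_self]

theorem walsh_values_of_four_to_one {m : ℕ}
    (φ : (Fin (m + 1) → ZMod 2) → (Fin (m - 1) → ZMod 2))
    (h : (Fin (m + 1) → ZMod 2) → ZMod 2)
    (f : (Fin (m - 1) → ZMod 2) × (Fin (m + 1) → ZMod 2) → ZMod 2)
    (hf : ∀ x y, f (x, y) = dotp x (φ y) + h y)
    (h4 : ∀ a, ((Finset.univ.filter fun y => φ y = a)).card = 4) :
    ∀ a b, walshP f a b ∈
      ({0, 2 ^ m, -(2 ^ m), 2 ^ (m + 1), -(2 ^ (m + 1))} : Set ℤ) := by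
  obtain ⟨n, rfl⟩ : ∃ n, m = n + 1 := by
    rcases m with _ | n
    · exfalso
      have hc := h4 0
      have hle : ((Finset.univ.filter fun y => φ y = 0)).card
          ≤ Fintype.card (Fin (0 + 1) → ZMod 2) := by
        rw [← Finset.card_univ]; exact Finset.card_filter_le _ _
      rw [hc] at hle
      simp [Fintype.card_fun] at hle
    · exact ⟨n, rfl⟩
  intro a b
  have hiff : ∀ y, (φ y + a = 0) ↔ (φ y = a) := by
    intro y
    have h2 : ∀ u v : ZMod 2, u + v = 0 ↔ u = v := by decide
    constructor
    · intro h0; funext j; exact (h2 _ _).1 (congrFun h0 j)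
    · intro h0; funext j; exact (h2 _ _).2 (congrFun h0 j)
  have step : ∀ y, (∑ x : Fin (n + 1 - 1) → ZMod 2, chr (f (x, y) + dotp a x + dotp b y))
      = (if φ y = a then (2:ℤ) ^ n else 0) * chr (h y + dotp b y) := by
    intro y
    have hrw : ∀ x : Fin (n + 1 - 1) → ZMod 2,
        f (x, y) + dotp a x + dotp b y = dotp x (φ y + a) + (h y + dotp b y) := by
      intro x
      rw [hf, dotp_add_right, dotp_comm a x]
      ring
    simp only [hrw, chr_add, ← Finset.sum_mul, sum_chr_dotp, hiff y]
    norm_num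
  have keysum : walshP f a b
      = 2 ^ n * ∑ y ∈ Finset.univ.filter (fun y => φ y = a), chr (h y + dotp b y) := by
    rw [walshP, Finset.sum_comm]
    simp only [step]
    rw [Finset.mul_sum, Finset.sum_filter]
    exact Finset.sum_congr rfl (fun y _ => by split_ifs <;> ring)
  set s := Finset.univ.filter (fun y => φ y = a) with hs
  set T := ∑ y ∈ s, chr (h y + dotp b y) with hT
  have hchr : ∀ z : ZMod 2, chr z = 1 ∨ chr z = -1 := by decide
  have hub : T ≤ 4 := by
    calc T ≤ ∑ y ∈ s, (1:ℤ) := Finset.sum_le_sum (fun y _ => by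
            rcases hchr (h y + dotp b y) with h1 | h1 <;> rw [h1] <;> norm_num)
    _ = 4 := by rw [Finset.sum_const, h4 a]; norm_num
  have hlb : -4 ≤ T := by
    calc (-4:ℤ) = ∑ y ∈ s, (-1:ℤ) := by rw [Finset.sum_const, h4 a]; norm_num
    _ ≤ T := Finset.sum_le_sum (fun y _ => by
            rcases hchr (h y + dotp b y) with h1 | h1 <;> rw [h1] <;> norm_num)
  have hmod : T % 2 = 0 := by
    rw [hT, Finset.sum_int_mod]
    have hone : ∀ y ∈ s, chr (h y + dotp b y) % 2 = 1 % 2 := by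
      intro y _
      rcases hchr (h y + dotp b y) with h1 | h1 <;> rw [h1] <;> decide
    rw [Finset.sum_congr rfl hone, Finset.sum_const, h4 a]
    decide
  have hT5 : T = -4 ∨ T = -2 ∨ T = 0 ∨ T = 2 ∨ T = 4 := by omega
  rw [keysum]
  simp only [Set.mem_insert_iff, Set.mem_singleton_iff]
  rcases hT5 with h1 | h1 | h1 | h1 | h1 <;> rw [h1]
  · right; right; right; right; ring
  · right; right; left; ring
  · left; ring
  · right; left; ring
  · right; right; right; left; ring
end
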